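/- Auxiliary summation for the q-Bessel 𝔉-evaluation: let ρ_k = q^{(ν+k)/2}/(1 − q^{ν+k}) for k ∈ ℤ (with q^{ν+k} ≠ 1 for the indices used). Then for every m ≥ 1 and n ∈ ℤ: ∑_{k_1=n}^{∞} ∑_{k_2=k_1+2}^{∞} ⋯ ∑_{k_m=k_{m−1}+2}^{∞} ρ_{k_1}ρ_{k_1+1} ρ_{k_2}ρ_{k_2+1} ⋯ ρ_{k_m}ρ_{k_m+1} = (q^{m(3m+1)/4} q^{m(ν+n−1)/2}/(q;q)_m) · ρ_n ρ_{n+1} ⋯ ρ_{n+m−1}. -/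

import Mathlib

open Classical

/-- q-Pochhammer symbol (a;q)_k. -/
noncomputable def qP (a q : ℂ) (k : ℕ) : ℂ := ∏ j ∈ Finset.range k, (1 - a * q ^ j)

/-- Infinite q-Pochhammer symbol (a;q)_∞. -/
noncomputable def qPInf (a q : ℂ) : ℂ := ∏' j : ℕ, (1 - a * q ^ j)

/-- Basic hypergeometric series ₀φ₁(;b;q,z). -/
noncomputable def phi01 (b q z : ℂ) : ℂ :=
  ∑' k : ℕ, q ^ (k * (k - 1)) * z ^ k / (qP q q k * qP b q k)

open Filter Topology


noncomputable def rho (q : ℝ) (ν : ℂ) (k : ℤ) : ℂ :=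
  (q : ℂ) ^ ((ν + (k : ℂ)) / 2) / (1 - (q : ℂ) ^ (ν + (k : ℂ)))

noncomputable def dd (q : ℝ) (ν : ℂ) (M : ℕ) (a : ℤ) : ℂ :=
  (q : ℂ) ^ (((M : ℂ) * a + ν + M) / 2) / (1 - (q : ℂ) ^ (M : ℂ))

noncomputable def FF (q : ℝ) (ν : ℂ) (M : ℕ) (a : ℤ) : ℂ :=
  dd q ν M a * ∏ i ∈ Finset.range M, rho q ν (a + i)

noncomputable def TT (q : ℝ) (ν : ℂ) (M : ℕ) (a : ℤ) : ℂ :=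
  (q : ℂ) ^ (((M : ℂ) - 1) * a / 2) * ∏ i ∈ Finset.range (M + 1), rho q ν (a + i)

lemma hQne {q : ℝ} (hq0 : 0 < q) : (q : ℂ) ≠ 0 := by exact_mod_cast hq0.ne'

lemma qexp {q : ℝ} (hq0 : 0 < q) (z : ℂ) : (q : ℂ) ^ z = Complex.exp (Complex.log q * z) :=
  Complex.cpow_def_of_ne_zero (hQne hq0) z

lemma qexp' {q : ℝ} (hq0 : 0 < q) (M : ℕ) : (q : ℂ) ^ M = Complex.exp (Complex.log q * M) := by
  rw [← Complex.cpow_natCast, qexp hq0]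

lemma one_sub_qpow_ne {q : ℝ} (hq0 : 0 < q) (hq1 : q < 1) {M : ℕ} (hM : 1 ≤ M) :
    1 - (q : ℂ) ^ (M : ℂ) ≠ 0 := by
  rw [Complex.cpow_natCast]
  intro h
  have h1 : (q : ℂ) ^ M = 1 := (sub_eq_zero.mp h).symm
  have h2 : (q : ℝ) ^ M = 1 := by exact_mod_cast h1
  have h3 : q ^ M < 1 := pow_lt_one₀ (le_of_lt hq0) hq1 (by omega)
  linarith

lemma tele_scalar {q : ℝ} (hq0 : 0 < q) (hq1 : q < 1) (ν : ℂ) {M : ℕ} (hM : 1 ≤ M) (a : ℤ)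
    (h0 : (q : ℂ) ^ (ν + (a : ℂ)) ≠ 1) (hM0 : (q : ℂ) ^ (ν + ((a + M : ℤ) : ℂ)) ≠ 1) :
    dd q ν M a * rho q ν a - dd q ν M (a + 1) * rho q ν (a + M)
      = (q : ℂ) ^ (((M : ℂ) - 1) * a / 2) * (rho q ν a * rho q ν (a + M)) := by
  have hQ := hQne hq0
  have h0' : 1 - (q : ℂ) ^ (ν + (a : ℂ)) ≠ 0 := sub_ne_zero.mpr h0.symm
  have hM0' : 1 - (q : ℂ) ^ (ν + ((a + M : ℤ) : ℂ)) ≠ 0 := sub_ne_zero.mpr hM0.symm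
  have hMne := one_sub_qpow_ne hq0 hq1 hM
  push_cast at hM0'
  unfold rho dd
  push_cast
  rw [Complex.cpow_natCast] at hMne
  field_simp [h0', hM0', hMne]
  simp only [qexp hq0, qexp' hq0]
  ring_nf
  simp only [← Complex.exp_nat_mul, ← Complex.exp_add]
  ring_nf

lemma prod_shift (q : ℝ) (ν : ℂ) (M : ℕ) (b : ℤ) :
    ∏ i ∈ Finset.range (M + 1), rho q ν (b + i)
      = rho q ν b * ∏ i ∈ Finset.range M, rho q ν ((b + 1) + i) := by
  rw [Finset.prod_range_succ', mul_comm]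
  congr 1
  · norm_num
  · exact Finset.prod_congr rfl fun i _ => by congr 1; push_cast; ring

lemma tele {q : ℝ} (hq0 : 0 < q) (hq1 : q < 1) (ν : ℂ) {M : ℕ} (hM : 1 ≤ M) (a : ℤ)
    (h0 : (q : ℂ) ^ (ν + (a : ℂ)) ≠ 1) (hM0 : (q : ℂ) ^ (ν + ((a + M : ℤ) : ℂ)) ≠ 1) :
    FF q ν M a - FF q ν M (a + 1) = TT q ν M a := by
  obtain ⟨M', rfl⟩ : ∃ M', M = M' + 1 := ⟨M - 1, by omega⟩
  have e1 : ∏ i ∈ Finset.range (M' + 1), rho q ν (a + i)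
      = rho q ν a * ∏ i ∈ Finset.range M', rho q ν ((a + 1) + i) := prod_shift q ν M' a
  have e2 : ∏ i ∈ Finset.range (M' + 1), rho q ν ((a + 1) + i)
      = (∏ i ∈ Finset.range M', rho q ν ((a + 1) + i)) * rho q ν (a + (M' + 1)) := by
    rw [Finset.prod_range_succ]; congr 1; push_cast; ring
  have e3 : ∏ i ∈ Finset.range (M' + 1 + 1), rho q ν (a + i)
      = rho q ν a * (∏ i ∈ Finset.range M', rho q ν ((a + 1) + i)) * rho q ν (a + (M' + 1)) := by
    rw [Finset.prod_range_succ, e1]; push_cast; ring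
  unfold FF TT
  rw [e1, e2, e3]
  have key := tele_scalar hq0 hq1 ν hM a h0 hM0
  push_cast at key ⊢
  linear_combination (∏ i ∈ Finset.range M', rho q ν ((a + 1) + i)) * key

lemma re_half (z : ℂ) : (z / 2).re = z.re / 2 := by
  rw [show (2 : ℂ) = ((2 : ℝ) : ℂ) by norm_num, Complex.div_ofReal_re]

lemma norm_qcpow {q : ℝ} (hq0 : 0 < q) (z : ℂ) : ‖(q : ℂ) ^ z‖ = q ^ z.re := by
  rw [Complex.norm_cpow_eq_rpow_re_of_pos hq0]

lemma rho_bound {q : ℝ} (hq0 : 0 < q) (hq1 : q < 1) (ν : ℂ) (k : ℤ)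
    (h : q ^ (ν.re + (k : ℝ)) ≤ 1 / 2) :
    ‖rho q ν k‖ ≤ 2 * q ^ ((ν.re + (k : ℝ)) / 2) := by
  unfold rho
  rw [norm_div, norm_qcpow hq0]
  have hre : ((ν + (k : ℂ)) / 2).re = (ν.re + (k : ℝ)) / 2 := by
    rw [re_half]; simp
  have hre2 : (ν + (k : ℂ)).re = ν.re + (k : ℝ) := by simp
  have hden : (1 : ℝ) / 2 ≤ ‖1 - (q : ℂ) ^ (ν + (k : ℂ))‖ := by
    have h1 : ‖(q : ℂ) ^ (ν + (k : ℂ))‖ = q ^ (ν.re + (k : ℝ)) := by rw [norm_qcpow hq0, hre2]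
    have h2 := norm_sub_norm_le (1 : ℂ) ((q : ℂ) ^ (ν + (k : ℂ)))
    rw [norm_one, h1] at h2
    linarith
  rw [hre]
  calc q ^ ((ν.re + (k : ℝ)) / 2) / ‖1 - (q : ℂ) ^ (ν + (k : ℂ))‖
      ≤ q ^ ((ν.re + (k : ℝ)) / 2) / (1 / 2) :=
        div_le_div_of_nonneg_left (Real.rpow_nonneg hq0.le _) (by norm_num) hden
    _ = 2 * q ^ ((ν.re + (k : ℝ)) / 2) := by ring

lemma exists_K {q : ℝ} (hq0 : 0 < q) (hq1 : q < 1) (ν : ℂ) (n : ℤ) :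
    ∃ K : ℕ, ∀ a : ℤ, n + K ≤ a → q ^ (ν.re + (a : ℝ)) ≤ 1 / 2 := by
  have h2 := (tendsto_pow_atTop_nhds_zero_of_lt_one hq0.le hq1).const_mul (q ^ (ν.re + (n : ℝ)))
  rw [mul_zero] at h2
  have h1 : Filter.Tendsto (fun k : ℕ => q ^ (ν.re + (n : ℝ) + k)) atTop (𝓝 0) :=
    h2.congr fun k => by rw [← Real.rpow_natCast q k, ← Real.rpow_add hq0]
  have h3 : ∀ᶠ k : ℕ in atTop, q ^ (ν.re + (n : ℝ) + k) < 1 / 2 :=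
    h1.eventually_lt_const (by norm_num)
  obtain ⟨K, hK⟩ := h3.exists_forall_of_atTop
  refine ⟨K, fun a ha => ?_⟩
  have := hK K le_rfl
  have hle : q ^ (ν.re + (a : ℝ)) ≤ q ^ (ν.re + (n : ℝ) + K) := by
    apply Real.rpow_le_rpow_of_exponent_ge hq0 hq1.le
    have : ((n : ℝ) + K) ≤ (a : ℝ) := by exact_mod_cast ha
    linarith
  linarith

lemma summable_base {q : ℝ} (hq0 : 0 < q) (hq1 : q < 1) (ν : ℂ) (c : ℝ) (hc : 0 ≤ c)
    (s : ℕ) (hs : 1 ≤ s) (n : ℤ) :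
    Summable (fun j : ℕ => q ^ (c * ((n : ℝ) + j)) *
      ∏ i ∈ Finset.range s, ‖rho q ν ((n + j) + i)‖) := by
  obtain ⟨K, hK⟩ := exists_K hq0 hq1 ν n
  rw [← summable_nat_add_iff K]
  set D : ℝ := 2 * q ^ ((ν.re + (n : ℝ) + K) / 2) with hD
  have hD0 : 0 ≤ D := by positivity
  set r : ℝ := q ^ ((1 : ℝ) / 2) with hr
  have hr0 : 0 ≤ r := Real.rpow_nonneg hq0.le _
  have hr1 : r < 1 := Real.rpow_lt_one hq0.le hq1 (by norm_num)
  apply Summable.of_nonneg_of_le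
    (fun j => by positivity)
    (fun j => ?_)
    (((summable_geometric_of_lt_one hr0 hr1)).mul_left (q ^ (c * ((n : ℝ) + K)) * D ^ s))
  have t1 : q ^ (c * ((n : ℝ) + (j + K : ℕ))) ≤ q ^ (c * ((n : ℝ) + K)) := by
    apply Real.rpow_le_rpow_of_exponent_ge hq0 hq1.le
    have : ((K : ℝ)) ≤ ((j + K : ℕ) : ℝ) := by push_cast; linarith [Nat.cast_nonneg (α := ℝ) j]
    nlinarith
  have t2 : ∀ i ∈ Finset.range s, ‖rho q ν ((n + (j + K : ℕ)) + i)‖ ≤ D * r ^ j := by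
    intro i _
    have hai : (n : ℤ) + K ≤ (n + (j + K : ℕ)) + i := by push_cast; omega
    have hb := rho_bound hq0 hq1 ν ((n + (j + K : ℕ)) + i) (hK _ hai)
    have hexp : (ν.re + (((n + (j + K : ℕ)) + i : ℤ) : ℝ)) / 2
        = (ν.re + (n : ℝ) + K) / 2 + ((j : ℝ) / 2 + i / 2) := by push_cast; ring
    have h5 : q ^ ((ν.re + (((n + (j + K : ℕ)) + i : ℤ) : ℝ)) / 2)
        ≤ q ^ ((ν.re + (n : ℝ) + K) / 2 + (j : ℝ) / 2) := by
      rw [hexp]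
      apply Real.rpow_le_rpow_of_exponent_ge hq0 hq1.le
      have : (0 : ℝ) ≤ (i : ℝ) / 2 := by positivity
      linarith
    have h6 : q ^ ((ν.re + (n : ℝ) + K) / 2 + (j : ℝ) / 2)
        = q ^ ((ν.re + (n : ℝ) + K) / 2) * r ^ j := by
      rw [Real.rpow_add hq0, hr, ← Real.rpow_natCast (q ^ ((1:ℝ)/2)) j, ← Real.rpow_mul hq0.le]
      congr 1
      push_cast; ring
    calc ‖rho q ν ((n + (j + K : ℕ)) + i)‖
        ≤ 2 * q ^ ((ν.re + (((n + (j + K : ℕ)) + i : ℤ) : ℝ)) / 2) := hb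
      _ ≤ 2 * (q ^ ((ν.re + (n : ℝ) + K) / 2) * r ^ j) := by nlinarith [Real.rpow_nonneg hq0.le ((ν.re + (n : ℝ) + K) / 2 + (j : ℝ) / 2), h5, h6]
      _ = D * r ^ j := by rw [hD]; ring
  have t3 : ∏ i ∈ Finset.range s, ‖rho q ν ((n + (j + K : ℕ)) + i)‖ ≤ (D * r ^ j) ^ s := by
    calc ∏ i ∈ Finset.range s, ‖rho q ν ((n + (j + K : ℕ)) + i)‖
        ≤ ∏ _i ∈ Finset.range s, (D * r ^ j) :=
          Finset.prod_le_prod (fun i _ => norm_nonneg _) t2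
      _ = (D * r ^ j) ^ s := by rw [Finset.prod_const, Finset.card_range]
  have t4 : ((D * r ^ j) ^ s : ℝ) ≤ D ^ s * r ^ j := by
    rw [mul_pow]
    have h7 : (r ^ j) ^ s ≤ r ^ j := by
      apply pow_le_of_le_one (by positivity) (pow_le_one₀ hr0 hr1.le) (by omega)
    have h8 : (0:ℝ) ≤ D ^ s := by positivity
    nlinarith [pow_nonneg (pow_nonneg hr0 j) s]
  calc q ^ (c * ((n : ℝ) + (j + K : ℕ))) * ∏ i ∈ Finset.range s, ‖rho q ν ((n + (j + K : ℕ)) + i)‖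
      ≤ q ^ (c * ((n : ℝ) + K)) * (D ^ s * r ^ j) := by
        apply mul_le_mul t1 (le_trans t3 t4) (by positivity) (Real.rpow_nonneg hq0.le _)
    _ = q ^ (c * ((n : ℝ) + K)) * D ^ s * r ^ j := by ring

lemma re_cast_eq {x : ℝ} {z : ℂ} (h : z = ((x : ℝ) : ℂ)) : z.re = x := by rw [h, Complex.ofReal_re]

lemma tendsto_FF {q : ℝ} (hq0 : 0 < q) (hq1 : q < 1) (ν : ℂ) {M : ℕ} (hM : 1 ≤ M) (n : ℤ) :
    Filter.Tendsto (fun N : ℕ => FF q ν M (n + N)) atTop (𝓝 0) := by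
  obtain ⟨K, hK⟩ := exists_K hq0 hq1 ν n
  set D : ℝ := 2 * q ^ ((ν.re + (n : ℝ) + K) / 2) with hD
  have hD0 : 0 ≤ D := by positivity
  set D2 : ℝ := ‖1 - (q : ℂ) ^ (M : ℂ)‖ with hD2
  have hD2pos : 0 < D2 := norm_pos_iff.mpr (one_sub_qpow_ne hq0 hq1 hM)
  set rr : ℝ := q ^ ((M : ℝ) / 2) with hrr
  have hrr0 : 0 ≤ rr := Real.rpow_nonneg hq0.le _
  have hrr1 : rr < 1 := by
    apply Real.rpow_lt_one hq0.le hq1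
    have : (1 : ℝ) ≤ (M : ℝ) := by exact_mod_cast hM
    linarith
  set C : ℝ := q ^ (((M : ℝ) * n + ν.re + M) / 2) / D2 * D ^ M with hC
  apply squeeze_zero_norm' (a := fun N : ℕ => C * rr ^ N)
  · rw [Filter.eventually_atTop]
    refine ⟨K, fun N hN => ?_⟩
    unfold FF
    rw [norm_mul]
    have hdd : ‖dd q ν M (n + N)‖ = q ^ (((M : ℝ) * ((n : ℝ) + N) + ν.re + M) / 2) / D2 := by
      unfold dd
      rw [norm_div, norm_qcpow hq0, ← hD2]
      congr 2
      rw [re_half]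
      congr 1
      simp [Complex.add_re, Complex.mul_re]
    have hprod : ∏ i ∈ Finset.range M, ‖rho q ν ((n + N) + i)‖ ≤ D ^ M := by
      calc ∏ i ∈ Finset.range M, ‖rho q ν ((n + N) + i)‖
          ≤ ∏ _i ∈ Finset.range M, D := by
            apply Finset.prod_le_prod (fun i _ => norm_nonneg _)
            intro i _
            have hai : n + (K : ℤ) ≤ (n + N) + i := by push_cast; omega
            have hb := rho_bound hq0 hq1 ν ((n + N) + i) (hK _ hai)
            have h5 : q ^ ((ν.re + (((n + N) + i : ℤ) : ℝ)) / 2) ≤ q ^ ((ν.re + (n : ℝ) + K) / 2) := by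
              apply Real.rpow_le_rpow_of_exponent_ge hq0 hq1.le
              have : ((n : ℝ) + K) ≤ (((n + N) + i : ℤ) : ℝ) := by push_cast; exact_mod_cast hai
              linarith
            rw [hD]
            linarith
        _ = D ^ M := by rw [Finset.prod_const, Finset.card_range]
    have hsplit : q ^ (((M : ℝ) * ((n : ℝ) + N) + ν.re + M) / 2)
        = q ^ (((M : ℝ) * n + ν.re + M) / 2) * rr ^ N := by
      rw [hrr, ← Real.rpow_natCast (q ^ ((M : ℝ)/2)) N, ← Real.rpow_mul hq0.le, ← Real.rpow_add hq0]
      congr 1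
      ring
    rw [norm_prod] at *
    calc ‖dd q ν M (n + N)‖ * ∏ i ∈ Finset.range M, ‖rho q ν ((n + N) + i)‖
        ≤ (q ^ (((M : ℝ) * ((n : ℝ) + N) + ν.re + M) / 2) / D2) * D ^ M := by
          rw [hdd]
          apply mul_le_mul_of_nonneg_left hprod (by positivity)
      _ = C * rr ^ N := by rw [hsplit, hC]; ring
  · have h2 := (tendsto_pow_atTop_nhds_zero_of_lt_one hrr0 hrr1).const_mul C
    rw [mul_zero] at h2
    exact h2

lemma single {q : ℝ} (hq0 : 0 < q) (hq1 : q < 1) (ν : ℂ) {M : ℕ} (hM : 1 ≤ M) (n : ℤ)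
    (hν : ∀ k : ℤ, n ≤ k → (q : ℂ) ^ (ν + (k : ℂ)) ≠ 1) :
    ∑' a : ℤ, (if n ≤ a then TT q ν M a else 0) = FF q ν M n := by
  have hinj : Function.Injective (fun j : ℕ => n + (j : ℤ)) := fun x y h => by
    simp only at h; omega
  have hsupp : Function.support (fun a : ℤ => if n ≤ a then TT q ν M a else 0)
      ⊆ Set.range (fun j : ℕ => n + (j : ℤ)) := by
    intro a ha
    simp only [Function.mem_support] at ha
    by_cases h : n ≤ a
    · exact ⟨(a - n).toNat, by simp only; omega⟩
    · simp [h] at ha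
  rw [← Function.Injective.tsum_eq hinj hsupp]
  have hsum : Summable (fun j : ℕ => TT q ν M (n + j)) := by
    have hM1 : (1 : ℝ) ≤ (M : ℝ) := by exact_mod_cast hM
    have base := summable_base hq0 hq1 ν (((M : ℝ) - 1) / 2) (by linarith) (M + 1) (by omega) n
    apply Summable.of_norm_bounded base
    intro j
    apply le_of_eq
    unfold TT
    rw [norm_mul, norm_qcpow hq0, norm_prod]
    congr 1
    apply congrArg
    apply re_cast_eq
    push_cast
    ring
  calc ∑' j : ℕ, (if n ≤ n + (j : ℤ) then TT q ν M (n + j) else 0)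
      = ∑' j : ℕ, TT q ν M (n + j) := tsum_congr fun j => if_pos (by omega)
    _ = FF q ν M n := by
      apply HasSum.tsum_eq
      rw [hsum.hasSum_iff_tendsto_nat]
      have hps : ∀ N : ℕ, ∑ j ∈ Finset.range N, TT q ν M (n + j)
          = FF q ν M n - FF q ν M (n + N) := by
        intro N
        calc ∑ j ∈ Finset.range N, TT q ν M (n + j)
            = ∑ j ∈ Finset.range N,
                ((fun j : ℕ => FF q ν M (n + j)) j - (fun j : ℕ => FF q ν M (n + j)) (j + 1)) := by
              apply Finset.sum_congr rfl
              intro j _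
              have h0 := hν (n + j) (by omega)
              have hM0 := hν ((n + j) + M) (by omega)
              have ht := tele hq0 hq1 ν hM (n + j) h0 hM0
              rw [← ht]
              congr 2
              push_cast
              ring
          _ = FF q ν M (n + (0 : ℕ)) - FF q ν M (n + N) := Finset.sum_range_sub' _ N
          _ = FF q ν M n - FF q ν M (n + N) := by norm_num
      have hten := (tendsto_const_nhds (x := FF q ν M n) (f := atTop (α := ℕ))).sub
        (tendsto_FF hq0 hq1 ν hM n)
      rw [sub_zero] at hten
      exact hten.congr fun N => (hps N).symm

def chainCond {N : ℕ} (k : Fin N → ℤ) : Prop := ∀ i j : Fin N, (j : ℕ) = (i : ℕ) + 1 → k i + 2 ≤ k j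

lemma cond_iff {m : ℕ} (k : Fin (m+1) → ℤ) :
    (∀ i : Fin (m+1), ∀ h : (i : ℕ) + 1 < m + 1, k i + 2 ≤ k ⟨(i : ℕ) + 1, h⟩) ↔ chainCond k := by
  constructor
  · intro h i j hij
    have hlt : (i : ℕ) + 1 < m + 1 := hij ▸ j.isLt
    have := h i hlt
    have hj : j = ⟨(i : ℕ) + 1, hlt⟩ := Fin.ext (by simp [hij])
    rw [hj]; exact this
  · intro h i hlt
    exact h i ⟨(i : ℕ) + 1, hlt⟩ rfl

lemma cond_cons {m : ℕ} (a : ℤ) (v : Fin (m+1) → ℤ) :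
    chainCond (Fin.cons a v : Fin (m+2) → ℤ) ↔ (a + 2 ≤ v 0 ∧ chainCond v) := by
  constructor
  · intro h
    refine ⟨?_, ?_⟩
    · have := h 0 1 (by rw [Fin.val_one, Fin.val_zero])
      rw [← Fin.succ_zero_eq_one, Fin.cons_succ, Fin.cons_zero] at this
      exact this
    · intro i j hij
      have := h i.succ j.succ (by simp [hij])
      simpa [Fin.cons_succ] using this
  · rintro ⟨h0, hc⟩ i j hij
    induction i using Fin.cases with
    | zero =>
      induction j using Fin.cases with
      | zero => simp at hij
      | succ j' =>
        have : j' = 0 := by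
          have := hij; simp at this; exact Fin.ext (by simpa using this)
        subst this
        simpa [Fin.cons_zero, Fin.cons_succ] using h0
    | succ i' =>
      induction j using Fin.cases with
      | zero => simp at hij
      | succ j' =>
        have hij' : (j' : ℕ) = (i' : ℕ) + 1 := by simpa using hij
        simpa [Fin.cons_succ] using hc i' j' hij'

lemma cond_ge {m : ℕ} {n : ℤ} {k : Fin (m+1) → ℤ} (h1 : n ≤ k 0) (h2 : chainCond k) :
    ∀ i : Fin (m+1), n ≤ k i := by
  intro i
  induction i using Fin.induction with
  | zero => exact h1
  | succ i' ih =>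
    have := h2 i'.castSucc i'.succ (by simp)
    omega

open Classical in
noncomputable def term (q : ℝ) (ν : ℂ) (n : ℤ) (m : ℕ) (k : Fin (m+1) → ℤ) : ℂ :=
  if n ≤ k 0 ∧ ∀ i : Fin (m+1), ∀ h : (i : ℕ) + 1 < m + 1, k i + 2 ≤ k ⟨(i : ℕ) + 1, h⟩ then
    ∏ i, rho q ν (k i) * rho q ν (k i + 1)
  else 0

open Classical in
lemma term_eq (q : ℝ) (ν : ℂ) (n : ℤ) (m : ℕ) (k : Fin (m+1) → ℤ) :
    term q ν n m k = if n ≤ k 0 ∧ chainCond k then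
      ∏ i, rho q ν (k i) * rho q ν (k i + 1) else 0 := by
  unfold term
  exact if_congr (and_congr_right fun _ => cond_iff k) rfl rfl

open Classical in
lemma term_cons (q : ℝ) (ν : ℂ) (n : ℤ) (m : ℕ) (a : ℤ) (v : Fin (m+1) → ℤ) :
    term q ν n (m+1) (Fin.cons a v)
      = if n ≤ a then (rho q ν a * rho q ν (a+1)) * term q ν (a+2) m v else 0 := by
  rw [term_eq, term_eq, Fin.cons_zero]
  by_cases h1 : n ≤ a
  · by_cases h2 : a + 2 ≤ v 0 ∧ chainCond v
    · rw [if_pos h1, if_pos ⟨h1, (cond_cons a v).mpr h2⟩, if_pos h2]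
      rw [Fin.prod_univ_succ]
      simp only [Fin.cons_zero, Fin.cons_succ]
    · rw [if_neg, if_pos h1, if_neg h2, mul_zero]
      rintro ⟨-, hcc⟩
      exact h2 ((cond_cons a v).mp hcc)
  · rw [if_neg, if_neg h1]
    rintro ⟨hh, -⟩; exact h1 hh

noncomputable def ww (q : ℝ) (ν : ℂ) (n : ℤ) (a : ℤ) : ℝ :=
  if n ≤ a then ‖rho q ν a * rho q ν (a + 1)‖ else 0

lemma ww_nonneg (q : ℝ) (ν : ℂ) (n a : ℤ) : 0 ≤ ww q ν n a := by
  unfold ww; split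
  · exact norm_nonneg _
  · exact le_refl 0

lemma summable_ww {q : ℝ} (hq0 : 0 < q) (hq1 : q < 1) (ν : ℂ) (n : ℤ) :
    Summable (ww q ν n) := by
  have base := summable_base hq0 hq1 ν 0 le_rfl 2 (by omega) n
  have hinj : Function.Injective (fun j : ℕ => n + (j : ℤ)) := fun x y h => by
    simp only at h; omega
  apply (Function.Injective.summable_iff hinj ?_).mp
  · apply base.congr
    intro j
    have e0 : (n + (j : ℤ)) + ((0 : ℕ) : ℤ) = n + j := by push_cast; ring
    have e1' : (n + (j : ℤ)) + ((1 : ℕ) : ℤ) = (n + j) + 1 := by push_cast; ring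
    simp only [Function.comp]
    unfold ww
    rw [if_pos (by omega)]
    rw [Finset.prod_range_succ, Finset.prod_range_one, e0, e1', zero_mul, Real.rpow_zero,
      one_mul, norm_mul]
  · intro x hx
    unfold ww
    rw [if_neg]
    intro hle
    exact hx ⟨(x - n).toNat, by simp only; omega⟩

lemma summable_W {q : ℝ} (hq0 : 0 < q) (hq1 : q < 1) (ν : ℂ) (n : ℤ) :
    ∀ m : ℕ, Summable (fun k : Fin (m+1) → ℤ => ∏ i, ww q ν n (k i))
  | 0 => by
      have hww := summable_ww hq0 hq1 ν n
      have h2 := ((Equiv.funUnique (Fin 1) ℤ).summable_iff (f := ww q ν n)).mpr hww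
      apply h2.congr
      intro k
      rw [Fin.prod_univ_one]
      rfl
  | (m+1) => by
      have hW := summable_W hq0 hq1 ν n m
      have hprod := Summable.mul_of_nonneg (summable_ww hq0 hq1 ν n) hW
        (fun a => ww_nonneg q ν n a)
        (fun k => Finset.prod_nonneg fun i _ => ww_nonneg q ν n (k i))
      set e : ℤ × (Fin (m+1) → ℤ) ≃ (Fin (m+2) → ℤ) := Fin.consEquiv (fun _ => ℤ) with he
      apply (e.summable_iff (f := fun k : Fin (m+2) → ℤ => ∏ i, ww q ν n (k i))).mp
      apply hprod.congr
      intro p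
      simp [Function.comp, he, Fin.consEquiv_apply, Fin.prod_univ_succ, Fin.cons_zero,
        Fin.cons_succ]

lemma summable_term {q : ℝ} (hq0 : 0 < q) (hq1 : q < 1) (ν : ℂ) (n : ℤ) (m : ℕ) :
    Summable (term q ν n m) := by
  apply Summable.of_norm_bounded (summable_W hq0 hq1 ν n m)
  intro k
  rw [term_eq]
  split
  · rename_i h
    obtain ⟨h1, h2⟩ := h
    rw [norm_prod]
    apply Finset.prod_le_prod (fun i _ => norm_nonneg _)
    intro i _
    unfold ww
    rw [if_pos (cond_ge h1 h2 i)]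
  · rw [norm_zero]
    exact Finset.prod_nonneg fun i _ => ww_nonneg q ν n (k i)

lemma qP_ne_zero {q : ℝ} (hq0 : 0 < q) (hq1 : q < 1) (s : ℕ) : qP (q : ℂ) (q : ℂ) s ≠ 0 := by
  unfold qP
  rw [Finset.prod_ne_zero_iff]
  intro j _ h
  have h1 : (q : ℂ) * (q : ℂ) ^ j = 1 := (sub_eq_zero.mp h).symm
  have h2 : q * q ^ j = 1 := by exact_mod_cast h1
  have h3 : q ^ j ≤ 1 := pow_le_one₀ hq0.le hq1.le
  nlinarith [pow_pos hq0 j]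

noncomputable def Cst (q : ℝ) (ν : ℂ) (m : ℕ) (n : ℤ) : ℂ :=
  (q : ℂ) ^ (((m : ℂ) * (3 * (m : ℂ) + 1)) / 4) * (q : ℂ) ^ ((m : ℂ) * (ν + (n : ℂ) - 1) / 2)
    / qP (q : ℂ) (q : ℂ) m

lemma const_base {q : ℝ} (hq0 : 0 < q) (hq1 : q < 1) (ν : ℂ) (n : ℤ) :
    dd q ν 1 n = Cst q ν 1 n := by
  unfold dd Cst qP
  rw [Finset.prod_range_one, pow_zero, mul_one, Complex.cpow_natCast, pow_one]
  rw [← Complex.cpow_add _ _ (hQne hq0)]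
  congr 1
  push_cast
  ring

lemma step_pointwise {q : ℝ} (hq0 : 0 < q) (hq1 : q < 1) (ν : ℂ) (m : ℕ) (a : ℤ) :
    (rho q ν a * rho q ν (a+1)) *
        (Cst q ν (m+1) (a+2) * ∏ i ∈ Finset.range (m+1), rho q ν ((a+2) + i))
      = Cst q ν (m+1) 2 * TT q ν (m+2) a := by
  unfold TT
  have hsplit : ∏ i ∈ Finset.range (m+2+1), rho q ν (a+i)
      = (rho q ν a * rho q ν (a+1)) * ∏ i ∈ Finset.range (m+1), rho q ν ((a+2)+i) := by
    rw [show m+2+1 = 2+(m+1) from by omega, Finset.prod_range_add]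
    congr 1
    · rw [Finset.prod_range_succ, Finset.prod_range_one]
      congr 2 <;> push_cast <;> ring
    · exact Finset.prod_congr rfl fun i _ => by congr 1; push_cast; ring
  rw [hsplit]
  unfold Cst
  rw [show ((m+1 : ℕ) : ℂ) * (ν + ((a+2 : ℤ) : ℂ) - 1) / 2
      = ((m+1 : ℕ) : ℂ) * (ν + ((2 : ℤ) : ℂ) - 1) / 2 + (((m+2 : ℕ) : ℂ) - 1) * a / 2 from by
    push_cast; ring]
  rw [Complex.cpow_add _ _ (hQne hq0)]
  ring

lemma const_step {q : ℝ} (hq0 : 0 < q) (hq1 : q < 1) (ν : ℂ) (m : ℕ) (n : ℤ) :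
    Cst q ν (m+1) 2 * dd q ν (m+2) n = Cst q ν (m+2) n := by
  unfold dd Cst
  have hpow2 : (1 : ℂ) - (q : ℂ) ^ (((m+2 : ℕ)) : ℂ) = 1 - (q : ℂ) * (q : ℂ) ^ (m+1) := by
    rw [Complex.cpow_natCast, pow_succ]; ring
  have hsucc : qP (q : ℂ) (q : ℂ) (m+2) = qP (q : ℂ) (q : ℂ) (m+1) * (1 - (q : ℂ) * (q : ℂ) ^ (m+1)) :=
    Finset.prod_range_succ _ _
  rw [hpow2, hsucc]
  rw [div_mul_div_comm]
  congr 1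
  rw [mul_assoc, ← Complex.cpow_add _ _ (hQne hq0), ← Complex.cpow_add _ _ (hQne hq0),
    ← Complex.cpow_add _ _ (hQne hq0)]
  congr 1
  push_cast
  ring

lemma main_sum {q : ℝ} (hq0 : 0 < q) (hq1 : q < 1) (ν : ℂ) :
    ∀ (m : ℕ) (n : ℤ), (∀ k : ℤ, n ≤ k → (q : ℂ) ^ (ν + (k : ℂ)) ≠ 1) →
      ∑' k : Fin (m+1) → ℤ, term q ν n m k
        = Cst q ν (m+1) n * ∏ i ∈ Finset.range (m+1), rho q ν (n + i)
  | 0, n, hν => by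
    have hcc : ∀ k : Fin 1 → ℤ, chainCond k := fun k i j hij => by
      have h1 := i.isLt; have h2 := j.isLt; omega
    calc ∑' k : Fin 1 → ℤ, term q ν n 0 k
        = ∑' a : ℤ, term q ν n 0 ((Equiv.funUnique (Fin 1) ℤ).symm a) :=
          (((Equiv.funUnique (Fin 1) ℤ).symm).tsum_eq (term q ν n 0)).symm
      _ = ∑' a : ℤ, (if n ≤ a then TT q ν 1 a else 0) := by
          apply tsum_congr
          intro a
          rw [term_eq]
          have hea : ∀ i : Fin 1, (Equiv.funUnique (Fin 1) ℤ).symm a i = a := fun i => rfl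
          have hbody : ∏ i : Fin 1, rho q ν ((Equiv.funUnique (Fin 1) ℤ).symm a i) *
              rho q ν ((Equiv.funUnique (Fin 1) ℤ).symm a i + 1) = TT q ν 1 a := by
            unfold TT
            rw [Fin.prod_univ_one, hea, Finset.prod_range_succ, Finset.prod_range_one]
            rw [show (((1:ℕ) : ℂ) - 1) * (a : ℂ) / 2 = 0 from by push_cast; ring,
              Complex.cpow_zero, one_mul]
            congr 2 <;> push_cast <;> ring
          by_cases h : n ≤ a
          · rw [if_pos ⟨by rw [hea 0]; exact h, hcc _⟩, if_pos h, hbody]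
          · rw [if_neg, if_neg h]
            rintro ⟨hh, -⟩
            rw [hea 0] at hh
            exact h hh
      _ = FF q ν 1 n := single hq0 hq1 ν le_rfl n hν
      _ = Cst q ν 1 n * ∏ i ∈ Finset.range 1, rho q ν (n + i) := by
          unfold FF
          rw [const_base hq0 hq1 ν n]
  | (m+1), n, hν => by
    calc ∑' k : Fin (m+2) → ℤ, term q ν n (m+1) k
        = ∑' p : ℤ × (Fin (m+1) → ℤ), term q ν n (m+1) (Fin.cons p.1 p.2) := by
          rw [← (Fin.consEquiv (fun _ : Fin (m+2) => ℤ)).tsum_eq (term q ν n (m+1))]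
          exact tsum_congr fun p => rfl
      _ = ∑' (a : ℤ) (v : Fin (m+1) → ℤ), term q ν n (m+1) (Fin.cons a v) := by
          apply Summable.tsum_prod'
          · apply (((Fin.consEquiv (fun _ : Fin (m+2) => ℤ)).summable_iff
              (f := term q ν n (m+1))).mpr (summable_term hq0 hq1 ν n (m+1))).congr
            intro p
            rfl
          · intro a
            apply Summable.congr ?_ (fun v => (term_cons q ν n m a v).symm)
            by_cases h : n ≤ a
            · simp only [if_pos h]
              exact (summable_term hq0 hq1 ν (a+2) m).mul_left _
            · simp only [if_neg h]
              exact summable_zero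
      _ = ∑' (a : ℤ), (if n ≤ a then Cst q ν (m+1) 2 * TT q ν (m+2) a else 0) := by
          apply tsum_congr
          intro a
          rw [tsum_congr (fun v => term_cons q ν n m a v)]
          by_cases h : n ≤ a
          · simp only [if_pos h]
            rw [tsum_mul_left, main_sum hq0 hq1 ν m (a+2) (fun k hk => hν k (by omega)),
              step_pointwise hq0 hq1 ν m a]
          · simp only [if_neg h, tsum_zero]
      _ = Cst q ν (m+1) 2 * ∑' (a : ℤ), (if n ≤ a then TT q ν (m+2) a else 0) := by
          rw [← tsum_mul_left]
          apply tsum_congr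
          intro a
          split <;> simp
      _ = Cst q ν (m+1) 2 * FF q ν (m+2) n := by
          rw [single hq0 hq1 ν (by omega) n hν]
      _ = Cst q ν (m+2) n * ∏ i ∈ Finset.range (m+2), rho q ν (n + i) := by
          unfold FF
          rw [← mul_assoc, const_step hq0 hq1 ν m n]

theorem rho_multiple_sum (q : ℝ) (hq0 : 0 < q) (hq1 : q < 1) (ν : ℂ) (n : ℤ) (m : ℕ)
    (hm : 0 < m) (hν : ∀ k : ℤ, n ≤ k → (q : ℂ) ^ (ν + (k : ℂ)) ≠ 1) :
    (∑' k : Fin m → ℤ,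
        if n ≤ k ⟨0, hm⟩ ∧ ∀ i : Fin m, ∀ h : (i : ℕ) + 1 < m, k i + 2 ≤ k ⟨(i : ℕ) + 1, h⟩ then
          ∏ i : Fin m,
            (q : ℂ) ^ ((ν + (k i : ℂ)) / 2) / (1 - (q : ℂ) ^ (ν + (k i : ℂ))) *
              ((q : ℂ) ^ ((ν + (k i : ℂ) + 1) / 2) / (1 - (q : ℂ) ^ (ν + (k i : ℂ) + 1)))
        else 0) =
      (q : ℂ) ^ ((m * (3 * m + 1) : ℂ) / 4) * (q : ℂ) ^ ((m : ℂ) * (ν + (n : ℂ) - 1) / 2) /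
          qP (q : ℂ) (q : ℂ) m *
        ∏ i ∈ Finset.range m,
          (q : ℂ) ^ ((ν + (n : ℂ) + i) / 2) / (1 - (q : ℂ) ^ (ν + (n : ℂ) + i)) := by
  obtain ⟨m', rfl⟩ : ∃ m', m = m' + 1 := ⟨m - 1, by omega⟩
  have hmain := main_sum hq0 hq1 ν m' n hν
  refine Eq.trans (tsum_congr fun k => ?_) (hmain.trans ?_)
  · unfold term
    rw [show (⟨0, hm⟩ : Fin (m'+1)) = 0 from rfl]
    apply if_congr Iff.rfl ?_ rfl
    apply Finset.prod_congr rfl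
    intro i _
    unfold rho
    push_cast
    ring
  · unfold Cst rho
    congr 1
    apply Finset.prod_congr rfl
    intro i _
    push_cast
    ring
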